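/- Let μ_i, μ be finite Borel measures on ℝ supported in [0, C], with μ_i → μ weakly, and suppose there is δ > 0 such that det(μ_i) := exp(∫_{(0,∞)} ln t dμ_i(t)) ≥ δ for all i. Then lim_{i→∞} μ_i({0}) = μ({0}). -/

import Mathlib

open Filter MeasureTheory

/-- Piecewise-linear bump: 1 on `(-∞,0]`, 0 on `[ε,∞)`. -/
noncomputable def phiFun (ε x : ℝ) : ℝ := max 0 (min 1 (1 - x / ε))

lemma phiFun_nonneg (ε x : ℝ) : 0 ≤ phiFun ε x := le_max_left _ _

lemma phiFun_le_one (ε x : ℝ) : phiFun ε x ≤ 1 :=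
  max_le zero_le_one (min_le_left _ _)

lemma phiFun_of_nonpos {ε x : ℝ} (hε : 0 < ε) (hx : x ≤ 0) : phiFun ε x = 1 := by
  have h1 : x / ε ≤ 0 := div_nonpos_of_nonpos_of_nonneg hx hε.le
  have h2 : (1 : ℝ) ≤ 1 - x / ε := by linarith
  rw [phiFun, min_eq_left h2, max_eq_right zero_le_one]

lemma phiFun_of_ge {ε x : ℝ} (hε : 0 < ε) (hx : ε ≤ x) : phiFun ε x = 0 := by
  have h1 : (1 : ℝ) ≤ x / ε := (one_le_div hε).mpr hx
  have h2 : 1 - x / ε ≤ 0 := by linarith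
  rw [phiFun, min_eq_right (h2.trans zero_le_one), max_eq_left h2]

lemma phiFun_continuous (ε : ℝ) : Continuous (phiFun ε) :=
  continuous_const.max (continuous_const.min
    (continuous_const.sub (continuous_id.div_const ε)))

/-- `phiFun` as a bounded continuous function. -/
noncomputable def phi (ε : ℝ) : BoundedContinuousFunction ℝ ℝ :=
  ⟨⟨phiFun ε, phiFun_continuous ε⟩, 1, fun x y => by
    rw [Real.dist_eq, abs_sub_le_iff]
    constructor <;>
      simp only [ContinuousMap.coe_mk] <;>
      linarith [phiFun_nonneg ε x, phiFun_le_one ε x, phiFun_nonneg ε y, phiFun_le_one ε y]⟩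

lemma phi_apply (ε x : ℝ) : phi ε x = phiFun ε x := rfl

/-- `ν(Iic 0) ≤ ∫ phi ε dν`. -/
lemma integral_phi_ge (ν : Measure ℝ) [IsFiniteMeasure ν] {ε : ℝ} (hε : 0 < ε) :
    (ν (Set.Iic 0)).toReal ≤ ∫ x, phi ε x ∂ν := by
  have hInt : Integrable (fun x => phi ε x) ν := (phi ε).integrable ν
  have h1 : ∫ x in Set.Iic 0, phi ε x ∂ν ≤ ∫ x, phi ε x ∂ν :=
    setIntegral_le_integral hInt (Filter.Eventually.of_forall fun x => phiFun_nonneg ε x)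
  have h2 : ∫ x in Set.Iic 0, phi ε x ∂ν = (ν (Set.Iic 0)).toReal := by
    have heq : ∫ x in Set.Iic 0, phi ε x ∂ν = ∫ _ in Set.Iic (0:ℝ), (1:ℝ) ∂ν :=
      setIntegral_congr_fun measurableSet_Iic
        (fun x (hx : x ∈ Set.Iic 0) => phiFun_of_nonpos hε hx)
    rw [heq, setIntegral_const, smul_eq_mul, mul_one, measureReal_def]
  linarith [h1, h2.symm.le]

/-- `∫ phi ε dν ≤ ν(Iio ε)`. -/
lemma integral_phi_le (ν : Measure ℝ) [IsFiniteMeasure ν] {ε : ℝ} (hε : 0 < ε) :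
    ∫ x, phi ε x ∂ν ≤ (ν (Set.Iio ε)).toReal := by
  have hInt : Integrable (fun x => phi ε x) ν := (phi ε).integrable ν
  have hsplit : (∫ x in Set.Iio ε, phi ε x ∂ν) + ∫ x in (Set.Iio ε)ᶜ, phi ε x ∂ν
      = ∫ x, phi ε x ∂ν := integral_add_compl measurableSet_Iio hInt
  have h0 : ∫ x in (Set.Iio ε)ᶜ, phi ε x ∂ν = 0 := by
    have heq : ∫ x in (Set.Iio ε)ᶜ, phi ε x ∂ν = ∫ _ in (Set.Iio ε)ᶜ, (0:ℝ) ∂ν :=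
      setIntegral_congr_fun measurableSet_Iio.compl
        (fun x hx => phiFun_of_ge hε (not_lt.mp hx))
    rw [heq, integral_zero]
  have h1 : ∫ x in Set.Iio ε, phi ε x ∂ν ≤ ∫ _ in Set.Iio ε, (1 : ℝ) ∂ν := by
    apply setIntegral_mono_on (hInt.integrableOn)
      (integrableOn_const (C := (1:ℝ)) (measure_lt_top ν _).ne) measurableSet_Iio
    exact fun x _ => phiFun_le_one ε x
  rw [setIntegral_const, smul_eq_mul, mul_one, measureReal_def] at h1
  linarith [hsplit.symm.le, h0.le]

/-- Measure of `Iio ε` splits off the atom, given no mass on negatives. -/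
lemma iio_split (ν : Measure ℝ) [IsFiniteMeasure ν] {ε : ℝ}
    (hneg : ν (Set.Iio 0) = 0) :
    (ν (Set.Iio ε)).toReal ≤ (ν {0}).toReal + (ν (Set.Ioo 0 ε)).toReal := by
  have hsub : Set.Iio ε ⊆ Set.Iio 0 ∪ ({0} ∪ Set.Ioo 0 ε) := by
    intro x hx
    rcases lt_trichotomy x 0 with h | h | h
    · exact Or.inl h
    · exact Or.inr (Or.inl h)
    · exact Or.inr (Or.inr ⟨h, hx⟩)
  have h1 : ν (Set.Iio ε) ≤ ν {0} + ν (Set.Ioo 0 ε) := by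
    calc ν (Set.Iio ε) ≤ ν (Set.Iio 0 ∪ ({0} ∪ Set.Ioo 0 ε)) := measure_mono hsub
      _ ≤ ν (Set.Iio 0) + ν ({0} ∪ Set.Ioo 0 ε) := measure_union_le _ _
      _ ≤ 0 + (ν {0} + ν (Set.Ioo 0 ε)) := by
          rw [hneg]; exact add_le_add le_rfl (measure_union_le _ _)
      _ = ν {0} + ν (Set.Ioo 0 ε) := by rw [zero_add]
  have h2 := ENNReal.toReal_mono
    (ENNReal.add_ne_top.mpr ⟨measure_ne_top ν _, measure_ne_top ν _⟩) h1
  rwa [ENNReal.toReal_add (measure_ne_top ν _) (measure_ne_top ν _)] at h2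

/-- If finite measures `μ_i` on `ℝ`, supported in `[0, C]`, converge weakly to `μ` and
their Fuglede–Kadison determinants `det(μ_i) = exp ∫_{(0,∞)} ln t dμ_i` are bounded below
by some `δ > 0`, then `μ_i({0}) → μ({0})`. -/
theorem atom_at_zero_convergence_of_det_bound
    (μs : ℕ → Measure ℝ) (μ : Measure ℝ)
    [∀ i, IsFiniteMeasure (μs i)] [IsFiniteMeasure μ]
    (C : ℝ)
    (hsupp : ∀ i, μs i (Set.Icc 0 C)ᶜ = 0) (hμsupp : μ (Set.Icc 0 C)ᶜ = 0)
    (hweak : ∀ f : BoundedContinuousFunction ℝ ℂ,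
      Tendsto (fun i => ∫ x, f x ∂(μs i)) atTop (nhds (∫ x, f x ∂μ)))
    (δ : ℝ) (hδ : 0 < δ)
    (hint : ∀ i, IntegrableOn Real.log (Set.Ioi 0) (μs i))
    (hdet : ∀ i, δ ≤ Real.exp (∫ t in Set.Ioi (0 : ℝ), Real.log t ∂(μs i))) :
    Tendsto (fun i => (μs i {0}).toReal) atTop (nhds (μ {0}).toReal) := by
  -- Weak convergence against real-valued test functions
  have hweakR : ∀ f : BoundedContinuousFunction ℝ ℝ,
      Tendsto (fun i => ∫ x, f x ∂(μs i)) atTop (nhds (∫ x, f x ∂μ)) := by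
    intro f
    obtain ⟨B, hB⟩ := f.bounded
    let F : BoundedContinuousFunction ℝ ℂ :=
      ⟨⟨fun x => (f x : ℂ), Complex.continuous_ofReal.comp f.continuous⟩,
        B, fun x y => by
          have hd : dist ((f x : ℂ)) ((f y : ℂ)) = dist (f x) (f y) := by
            rw [Complex.dist_eq, ← Complex.ofReal_sub, Complex.norm_real, Real.norm_eq_abs, Real.dist_eq]
          simpa only [ContinuousMap.coe_mk, hd] using hB x y⟩
    have h := hweak F
    have hF : ∀ (ν : Measure ℝ), ∫ x, F x ∂ν = ((∫ x, f x ∂ν : ℝ) : ℂ) := by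
      intro ν; exact integral_ofReal
    rw [hF] at h
    simp only [hF] at h
    have := (Complex.continuous_re.tendsto _).comp h
    simpa [Function.comp_def] using this
  -- no mass on negatives
  have hIioSub : Set.Iio (0 : ℝ) ⊆ (Set.Icc 0 C)ᶜ := by
    intro x hx h; exact absurd h.1 (not_le.mpr hx)
  have hIio : ∀ i, μs i (Set.Iio 0) = 0 := fun i => measure_mono_null hIioSub (hsupp i)
  have hμIio : μ (Set.Iio 0) = 0 := measure_mono_null hIioSub hμsupp
  -- uniform mass bound
  have htot : Tendsto (fun i => (μs i Set.univ).toReal) atTop (nhds (μ Set.univ).toReal) := by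
    have := hweakR 1
    simpa [integral_const, measureReal_def] using this
  obtain ⟨K, hK⟩ := htot.bddAbove_range
  have hKb : ∀ i, (μs i Set.univ).toReal ≤ K := fun i => hK (Set.mem_range_self i)
  have hK0 : 0 ≤ K := le_trans ENNReal.toReal_nonneg (hKb 0)
  set L : ℝ := max (Real.log C) 0 with hLdef
  have hL : 0 ≤ L := le_max_right _ _
  -- key mass estimate near 0
  have masskey : ∀ ε : ℝ, 0 < ε → ε < 1 → ∀ i,
      (μs i (Set.Ioo 0 ε)).toReal ≤ (L * K - Real.log δ) / (-Real.log ε) := by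
    intro ε hε hε1 i
    have hlog : Real.log δ ≤ ∫ t in Set.Ioi 0, Real.log t ∂(μs i) := by
      have := Real.log_le_log hδ (hdet i)
      rwa [Real.log_exp] at this
    have hunion : Set.Ioo 0 ε ∪ Set.Ici ε = Set.Ioi (0 : ℝ) := Set.Ioo_union_Ici_eq_Ioi hε
    have hdisj : Disjoint (Set.Ioo (0:ℝ) ε) (Set.Ici ε) := by
      apply Set.disjoint_left.mpr
      intro x hx hx2
      exact absurd hx.2 (not_lt.mpr hx2)
    have hint1 : IntegrableOn Real.log (Set.Ioo 0 ε) (μs i) :=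
      (hint i).mono_set (fun x hx => hx.1)
    have hint2 : IntegrableOn Real.log (Set.Ici ε) (μs i) :=
      (hint i).mono_set (fun x hx => lt_of_lt_of_le hε hx)
    have hsplit : ∫ t in Set.Ioi 0, Real.log t ∂(μs i)
        = (∫ t in Set.Ioo 0 ε, Real.log t ∂(μs i)) + ∫ t in Set.Ici ε, Real.log t ∂(μs i) := by
      rw [← hunion, setIntegral_union hdisj measurableSet_Ici hint1 hint2]
    have hae : ∀ᵐ t ∂(μs i), t ∈ Set.Icc 0 C := by
      rw [ae_iff]
      exact hsupp i
    have hA : ∫ t in Set.Ici ε, Real.log t ∂(μs i) ≤ L * K := by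
      have h1 : ∫ t in Set.Ici ε, Real.log t ∂(μs i) ≤ ∫ _ in Set.Ici ε, L ∂(μs i) := by
        apply setIntegral_mono_ae_restrict hint2
          (integrableOn_const (C := L) (measure_lt_top _ _).ne)
        apply (ae_restrict_iff' measurableSet_Ici).mpr
        filter_upwards [hae] with t ht hts
        calc Real.log t ≤ Real.log C := Real.log_le_log (lt_of_lt_of_le hε hts) ht.2
          _ ≤ L := le_max_left _ _
      rw [setIntegral_const, smul_eq_mul] at h1
      refine h1.trans ?_
      calc (μs i (Set.Ici ε)).toReal * L ≤ K * L := by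
            apply mul_le_mul_of_nonneg_right ?_ hL
            exact le_trans (ENNReal.toReal_mono (measure_ne_top _ _)
              (measure_mono (Set.subset_univ _))) (hKb i)
        _ = L * K := mul_comm _ _
    have hB : ∫ t in Set.Ioo 0 ε, Real.log t ∂(μs i)
        ≤ (μs i (Set.Ioo 0 ε)).toReal * Real.log ε := by
      have h1 : ∫ t in Set.Ioo 0 ε, Real.log t ∂(μs i)
          ≤ ∫ _ in Set.Ioo 0 ε, Real.log ε ∂(μs i) := by
        apply setIntegral_mono_on hint1
          (integrableOn_const (C := Real.log ε) (measure_lt_top _ _).ne) measurableSet_Ioo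
        exact fun x hx => Real.log_le_log hx.1 hx.2.le
      rwa [setIntegral_const, smul_eq_mul] at h1
    have hlogε : Real.log ε < 0 := Real.log_neg hε hε1
    set m := (μs i (Set.Ioo 0 ε)).toReal with hmdef
    have hm : 0 ≤ m := ENNReal.toReal_nonneg
    have hkey : Real.log δ ≤ m * Real.log ε + L * K := by
      rw [hsplit] at hlog
      linarith
    rw [le_div_iff₀ (by linarith : (0:ℝ) < -Real.log ε)]
    nlinarith
  -- main estimate
  rw [Metric.tendsto_atTop]
  intro η hη
  -- choose ε small
  set D : ℝ := max (L * K - Real.log δ) 0 with hDdef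
  have hD : 0 ≤ D := le_max_right _ _
  set ε₂ : ℝ := Real.exp (-(3 * (D + 1) / η)) with hε₂def
  have hε₂pos : 0 < ε₂ := Real.exp_pos _
  have hε₂log : Real.log ε₂ = -(3 * (D + 1) / η) := Real.log_exp _
  have hε₂1 : ε₂ < 1 := by
    rw [hε₂def]
    apply Real.exp_lt_one_iff.mpr
    have h : 0 < 3 * (D + 1) / η := by positivity
    linarith
  -- choose ε₁ making μ (Ioo 0 ε₁) small
  have hμsmall : ∃ ε₁ : ℝ, 0 < ε₁ ∧ (μ (Set.Ioo 0 ε₁)).toReal < η / 3 := by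
    have hiInter : ⋂ n : ℕ, Set.Ioo (0:ℝ) (1 / (n + 1)) = ∅ := by
      ext x
      simp only [Set.mem_iInter, Set.mem_Ioo, Set.mem_empty_iff_false, iff_false, not_forall]
      by_cases hx : 0 < x
      · obtain ⟨n, hn⟩ := exists_nat_one_div_lt hx
        exact ⟨n, fun h => absurd h.2 (not_lt.mpr hn.le)⟩
      · exact ⟨0, fun h => absurd h.1 hx⟩
    have hmono : Antitone (fun n : ℕ => Set.Ioo (0:ℝ) (1 / (n + 1))) := by
      intro a b hab
      apply Set.Ioo_subset_Ioo le_rfl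
      apply one_div_le_one_div_of_le (by positivity)
      exact_mod_cast add_le_add_left (Nat.cast_le.mpr hab) 1
    have htend := tendsto_measure_iInter_atTop
      (μ := μ) (s := fun n : ℕ => Set.Ioo (0:ℝ) (1 / (n + 1)))
      (fun n => measurableSet_Ioo.nullMeasurableSet) hmono ⟨0, measure_ne_top _ _⟩
    rw [hiInter] at htend
    simp only [measure_empty] at htend
    have htoReal : Tendsto (fun n : ℕ => (μ (Set.Ioo (0:ℝ) (1 / (n + 1)))).toReal)
        atTop (nhds 0) := by
      have := (ENNReal.tendsto_toReal (by simp)).comp htend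
      simpa [Function.comp_def] using this
    obtain ⟨n, hn⟩ := (htoReal.eventually (gt_mem_nhds (by positivity : (0:ℝ) < η / 3))).exists
    exact ⟨1 / (n + 1), by positivity, hn⟩
  obtain ⟨ε₁, hε₁pos, hε₁small⟩ := hμsmall
  set ε : ℝ := min ε₁ ε₂ with hεdef
  have hεpos : 0 < ε := lt_min hε₁pos hε₂pos
  have hε1 : ε < 1 := lt_of_le_of_lt (min_le_right _ _) hε₂1
  -- μs i (Ioo 0 ε) is small uniformly
  have hb1 : ∀ i, (μs i (Set.Ioo 0 ε)).toReal < η / 3 := by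
    intro i
    have h1 := masskey ε hεpos hε1 i
    have hlogmono : Real.log ε ≤ Real.log ε₂ := Real.log_le_log hεpos (min_le_right _ _)
    have hden : 3 * (D + 1) / η ≤ -Real.log ε := by
      rw [hε₂log] at hlogmono
      linarith
    have hdenpos : (0:ℝ) < 3 * (D + 1) / η := by positivity
    have h2 : (L * K - Real.log δ) / (-Real.log ε) ≤ D / (-Real.log ε) :=
      div_le_div_of_nonneg_right (le_max_left _ _) (lt_of_lt_of_le hdenpos hden).le
    have h3 : D / (-Real.log ε) ≤ D / (3 * (D + 1) / η) :=
      div_le_div_of_nonneg_left hD hdenpos hden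
    have h4 : D / (3 * (D + 1) / η) < η / 3 := by
      rw [div_lt_iff₀ hdenpos]
      have : η / 3 * (3 * (D + 1) / η) = D + 1 := by
        field_simp
      rw [this]
      linarith
    linarith
  -- μ (Ioo 0 ε) is small
  have hb2 : (μ (Set.Ioo 0 ε)).toReal < η / 3 := by
    refine lt_of_le_of_lt ?_ hε₁small
    exact ENNReal.toReal_mono (measure_ne_top _ _)
      (measure_mono (Set.Ioo_subset_Ioo le_rfl (min_le_left _ _)))
  -- weak convergence for phi ε
  obtain ⟨N, hN⟩ := Metric.tendsto_atTop.mp (hweakR (phi ε)) (η / 3) (by positivity)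
  refine ⟨N, fun n hn => ?_⟩
  have hdist := hN n hn
  rw [Real.dist_eq] at hdist ⊢
  rw [abs_lt] at hdist
  -- atom bounds
  have hatom_le : ∀ (ν : Measure ℝ) [IsFiniteMeasure ν],
      (ν {0}).toReal ≤ (ν (Set.Iic 0)).toReal := by
    intro ν _
    exact ENNReal.toReal_mono (measure_ne_top _ _)
      (measure_mono (fun x hx => by simp at hx; simp [hx]))
  have hup : (μs n {0}).toReal < (μ {0}).toReal + 2 * (η / 3) := by
    have c1 : (μs n {0}).toReal ≤ ∫ x, phi ε x ∂(μs n) :=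
      le_trans (hatom_le (μs n)) (integral_phi_ge (μs n) hεpos)
    have c2 : ∫ x, phi ε x ∂μ ≤ (μ (Set.Iio ε)).toReal := integral_phi_le μ hεpos
    have c3 := iio_split μ (ε := ε) hμIio
    linarith [hdist.2]
  have hdown : (μ {0}).toReal < (μs n {0}).toReal + 2 * (η / 3) := by
    have c1 : (μ {0}).toReal ≤ ∫ x, phi ε x ∂μ :=
      le_trans (hatom_le μ) (integral_phi_ge μ hεpos)
    have c2 : ∫ x, phi ε x ∂(μs n) ≤ (μs n (Set.Iio ε)).toReal :=
      integral_phi_le (μs n) hεpos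
    have c3 := iio_split (μs n) (ε := ε) (hIio n)
    linarith [hdist.1, hb1 n]
  rw [abs_lt]
  constructor <;> linarith
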